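/- For all x ∈ ℝⁿ and all y ∈ Fix(T, P_U), it holds that ‖P_U(T(x)) − y‖² ≤ ‖x − y‖² − ‖T(x) − x‖² − ‖P_U(T(x)) − T(x)‖². -/

import Mathlib

/-- An operator is firmly nonexpansive if
`‖T x - T y‖² ≤ ‖x - y‖² - ‖(T x - T y) - (x - y)‖²` for all `x, y`. -/
def FirmlyNonexpansive {n : ℕ} (T : EuclideanSpace ℝ (Fin n) → EuclideanSpace ℝ (Fin n)) : Prop :=
  ∀ x y, ‖T x - T y‖ ^ 2 ≤ ‖x - y‖ ^ 2 - ‖(T x - T y) - (x - y)‖ ^ 2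

/-- `P` is the orthogonal projection onto `C`: for each `x`, `P x ∈ C` and `P x`
minimizes the distance from `x` to points of `C`. -/
def IsProjOn {n : ℕ} (C : Set (EuclideanSpace ℝ (Fin n)))
    (P : EuclideanSpace ℝ (Fin n) → EuclideanSpace ℝ (Fin n)) : Prop :=
  ∀ x, P x ∈ C ∧ ∀ y ∈ C, ‖x - P x‖ ≤ ‖x - y‖

lemma proj_orth_aux {n : ℕ} (U : Set (EuclideanSpace ℝ (Fin n)))
    (hUaff : ∀ x ∈ U, ∀ y ∈ U, ∀ t : ℝ, t • x + (1 - t) • y ∈ U)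
    (PU : EuclideanSpace ℝ (Fin n) → EuclideanSpace ℝ (Fin n))
    (hPU : IsProjOn U PU) (z y : EuclideanSpace ℝ (Fin n)) (hyU : y ∈ U) :
    inner ℝ (z - PU z) (y - PU z) = (0 : ℝ) := by
  set c : ℝ := inner ℝ (z - PU z) (y - PU z) with hc
  set d : ℝ := ‖y - PU z‖ ^ 2 with hdd
  have hd : 0 ≤ d := sq_nonneg _
  have key : ∀ t : ℝ, 0 ≤ -2 * t * c + t ^ 2 * d := by
    intro t
    have hmem : t • y + (1 - t) • PU z ∈ U := hUaff y hyU (PU z) (hPU z).1 t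
    have h1 := (hPU z).2 _ hmem
    have h2 : z - (t • y + (1 - t) • PU z) = (z - PU z) - t • (y - PU z) := by
      module
    have h3 : ‖z - PU z‖ ^ 2 ≤ ‖(z - PU z) - t • (y - PU z)‖ ^ 2 := by
      rw [← h2]; exact pow_le_pow_left₀ (norm_nonneg _) h1 2
    have h4 : ‖(z - PU z) - t • (y - PU z)‖ ^ 2
        = ‖z - PU z‖ ^ 2 - 2 * (t * c) + t ^ 2 * d := by
      rw [norm_sub_sq_real, real_inner_smul_right, norm_smul]
      rw [hc, hdd]
      ring_nf
      rw [Real.norm_eq_abs, sq_abs]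
    nlinarith [h3, h4]
  by_contra hne
  have hd1 : 0 < d + 1 := by linarith
  have h5 := key (c / (d + 1))
  set s : ℝ := c / (d + 1) with hs
  have hcs : c = s * (d + 1) := by rw [hs, div_mul_cancel₀ _ hd1.ne']
  have hsne : s ≠ 0 := by
    intro h; apply hne; rw [hcs, h]; ring
  have hs2 : 0 < s ^ 2 := by positivity
  rw [hcs] at h5
  nlinarith [hs2, hd]

/-- For a firmly nonexpansive `T` and the projection `P_U` onto an affine subspace `U`:
`‖P_U(T(x)) − y‖² ≤ ‖x − y‖² − ‖T(x) − x‖² − ‖P_U(T(x)) − T(x)‖²`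
for all `x` and all common fixed points `y` of `T` and `P_U`. -/
theorem map_step_fejer {n : ℕ}
    (T : EuclideanSpace ℝ (Fin n) → EuclideanSpace ℝ (Fin n))
    (hT : FirmlyNonexpansive T)
    (U : Set (EuclideanSpace ℝ (Fin n))) (hUne : U.Nonempty)
    (hUaff : ∀ x ∈ U, ∀ y ∈ U, ∀ t : ℝ, t • x + (1 - t) • y ∈ U)
    (PU : EuclideanSpace ℝ (Fin n) → EuclideanSpace ℝ (Fin n))
    (hPU : IsProjOn U PU)
    (x y : EuclideanSpace ℝ (Fin n)) (hyT : T y = y) (hyU : y ∈ U) :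
    ‖PU (T x) - y‖ ^ 2 ≤ ‖x - y‖ ^ 2 - ‖T x - x‖ ^ 2 - ‖PU (T x) - T x‖ ^ 2 := by
  -- firm nonexpansiveness at (x, y)
  have hfirm := hT x y
  rw [hyT] at hfirm
  have hsub : (T x - y) - (x - y) = T x - x := by module
  rw [hsub] at hfirm
  -- Pythagoras for the projection of T x
  set z := T x with hz
  have horth := proj_orth_aux U hUaff PU hPU z y hyU
  have hdecomp : z - y = (z - PU z) + (PU z - y) := by module
  have hpyth : ‖z - y‖ ^ 2 = ‖z - PU z‖ ^ 2 + ‖PU z - y‖ ^ 2 := by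
    rw [hdecomp, norm_add_sq_real]
    have : inner ℝ (z - PU z) (PU z - y) = (0:ℝ) := by
      have : PU z - y = -(y - PU z) := by module
      rw [this, inner_neg_right, horth, neg_zero]
    rw [this]; ring
  have hrev : ‖PU z - z‖ = ‖z - PU z‖ := norm_sub_rev _ _
  rw [hrev]
  linarith [hfirm, hpyth]
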